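/- arXiv:2603.20996 — 4 statements merged into one kernel-verified Lean document; each statement's English description precedes it below -/
import Mathlib

section
/- Bound on Volterra integrals (drift case): Let f : [0,T] → ℝ≥0 be Borel, locally bounded, and non-decreasing, and let K₁ satisfy sup_{t∈[0,T]} ∫₀ᵗ K₁(t,s)^{2β/(β+1)} ds < ∞ for some β > 1. Then for every a > 0, with ρ = (β+1)/(2β) ∈ (0,1), for all t ∈ [0,T]: ∫₀ᵗ K₁(t,s) f(s) ds ≤ φ(t) ( ρ·f(t)/a^{1/ρ} + (1−ρ)·a^{1/(1−ρ)} ∫₀ᵗ f(s) ds ), where φ(t) = (∫₀ᵗ K₁(t,s)^{2β/(β+1)} ds)^{(β+1)/(2β)}. -/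
open MeasureTheory Set

/-- Bound on Volterra integrals, drift case: for non-decreasing `f ≥ 0` and a kernel `K₁`
with `∫₀ᵗ K₁(t,s)^{2β/(β+1)} ds < ∞`, with `ρ = (β+1)/(2β)`, for every `a > 0`:
`∫₀ᵗ K₁(t,s) f(s) ds ≤ φ(t) (ρ f(t)/a^{1/ρ} + (1-ρ) a^{1/(1-ρ)} ∫₀ᵗ f(s) ds)`. -/
theorem volterra_integral_bound_drift
    (T β : ℝ) (hT : 0 < T) (hβ : 1 < β)
    (K₁ : ℝ → ℝ → ℝ) (hKnn : ∀ t s, 0 ≤ K₁ t s)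
    (hKmeas : ∀ t, Measurable (K₁ t))
    (hKint : ∀ t ∈ Icc (0 : ℝ) T,
      IntegrableOn (fun s => K₁ t s ^ (2 * β / (β + 1))) (Ioc 0 t))
    (f : ℝ → ℝ) (hfnn : ∀ t, 0 ≤ f t) (hfmeas : Measurable f)
    (hfint : IntegrableOn f (Icc 0 T))
    (hfmono : MonotoneOn f (Icc 0 T))
    (hKf : ∀ t ∈ Icc (0 : ℝ) T, IntegrableOn (fun s => K₁ t s * f s) (Ioc 0 t)) :
    ∀ a : ℝ, 0 < a → ∀ t ∈ Icc (0 : ℝ) T,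
      ∫ s in Ioc (0 : ℝ) t, K₁ t s * f s ≤
        (∫ s in Ioc (0 : ℝ) t, K₁ t s ^ (2 * β / (β + 1))) ^ ((β + 1) / (2 * β)) *
          (((β + 1) / (2 * β)) * f t / a ^ (1 / ((β + 1) / (2 * β)))
            + (1 - (β + 1) / (2 * β)) * a ^ (1 / (1 - (β + 1) / (2 * β)))
              * ∫ s in Ioc (0 : ℝ) t, f s) := by
  intro a ha t ht
  have hβ0 : (0:ℝ) < β := by linarith
  set ρ : ℝ := (β + 1) / (2 * β) with hρdef
  set p : ℝ := 2 * β / (β + 1) with hpdef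
  set q : ℝ := 2 * β / (β - 1) with hqdef
  have hρpos : 0 < ρ := by positivity
  have hρlt : ρ < 1 := by
    rw [hρdef, div_lt_one (by positivity)]; linarith
  have h1ρ : 1 - ρ = (β - 1) / (2 * β) := by
    rw [hρdef]; field_simp; ring
  have hpρ : 1 / ρ = p := by
    rw [hρdef, hpdef, one_div_div]
  have hqρ : 1 / (1 - ρ) = q := by
    rw [h1ρ, hqdef, one_div_div]
  have hpq : p.HolderConjugate q := by
    rw [Real.holderConjugate_iff]; constructor
    · rw [hpdef, lt_div_iff₀ (by positivity)]; linarith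
    · rw [hpdef, hqdef]; field_simp; ring
  -- measure on (0, t]
  set μ := volume.restrict (Ioc (0:ℝ) t) with hμdef
  have hsub : Ioc (0:ℝ) t ⊆ Icc 0 T := fun s hs => ⟨le_of_lt hs.1, hs.2.trans ht.2⟩
  have hfint' : IntegrableOn f (Ioc 0 t) := hfint.mono_set hsub
  have hKint' : IntegrableOn (fun s => K₁ t s ^ p) (Ioc 0 t) := hKint t ht
  have hKf' : IntegrableOn (fun s => K₁ t s * f s) (Ioc 0 t) := hKf t ht
  -- lintegral versions
  have key : ∫⁻ s, ENNReal.ofReal (K₁ t s * f s) ∂μ ≤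
      ENNReal.ofReal (f t) ^ ρ *
        ((∫⁻ s, ENNReal.ofReal (K₁ t s ^ p) ∂μ) ^ (1/p) *
          (∫⁻ s, ENNReal.ofReal (f s) ∂μ) ^ (1/q)) := by
    have step1 : ∫⁻ s, ENNReal.ofReal (K₁ t s * f s) ∂μ ≤
        ∫⁻ s, ENNReal.ofReal (f t) ^ ρ *
          (ENNReal.ofReal (K₁ t s) * ENNReal.ofReal (f s) ^ (1 - ρ)) ∂μ := by
      refine lintegral_mono_ae ?_
      filter_upwards [ae_restrict_mem measurableSet_Ioc] with s hs
      have hst : f s ≤ f t := hfmono (hsub hs) ht hs.2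
      calc ENNReal.ofReal (K₁ t s * f s)
          = ENNReal.ofReal (K₁ t s) * (ENNReal.ofReal (f s) ^ ρ *
              ENNReal.ofReal (f s) ^ (1 - ρ)) := by
            have hsum : ρ + (1 - ρ) = 1 := by ring
            rw [ENNReal.ofReal_mul (hKnn t s),
              ← ENNReal.rpow_add_of_nonneg _ _ hρpos.le (by linarith), hsum,
              ENNReal.rpow_one]
        _ ≤ ENNReal.ofReal (K₁ t s) * (ENNReal.ofReal (f t) ^ ρ *
              ENNReal.ofReal (f s) ^ (1 - ρ)) := by
            gcongr
        _ = ENNReal.ofReal (f t) ^ ρ *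
              (ENNReal.ofReal (K₁ t s) * ENNReal.ofReal (f s) ^ (1 - ρ)) := by ring
    have step2 : ∫⁻ s, ENNReal.ofReal (f t) ^ ρ *
          (ENNReal.ofReal (K₁ t s) * ENNReal.ofReal (f s) ^ (1 - ρ)) ∂μ =
        ENNReal.ofReal (f t) ^ ρ *
          ∫⁻ s, ENNReal.ofReal (K₁ t s) * ENNReal.ofReal (f s) ^ (1 - ρ) ∂μ := by
      rw [lintegral_const_mul]
      exact ((ENNReal.measurable_ofReal.comp (hKmeas t)).mul
        ((ENNReal.measurable_ofReal.comp hfmeas).pow_const _))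
    have step3 : ∫⁻ s, ENNReal.ofReal (K₁ t s) * ENNReal.ofReal (f s) ^ (1 - ρ) ∂μ ≤
        (∫⁻ s, ENNReal.ofReal (K₁ t s) ^ p ∂μ) ^ (1/p) *
          (∫⁻ s, (ENNReal.ofReal (f s) ^ (1 - ρ)) ^ q ∂μ) ^ (1/q) := by
      exact ENNReal.lintegral_mul_le_Lp_mul_Lq μ hpq
        (ENNReal.measurable_ofReal.comp (hKmeas t)).aemeasurable
        ((ENNReal.measurable_ofReal.comp hfmeas).pow_const _).aemeasurable
    have hKp : ∀ s, ENNReal.ofReal (K₁ t s) ^ p = ENNReal.ofReal (K₁ t s ^ p) := by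
      intro s
      rw [ENNReal.ofReal_rpow_of_nonneg (hKnn t s) hpq.nonneg]
    have hfq : ∀ s, (ENNReal.ofReal (f s) ^ (1 - ρ)) ^ q = ENNReal.ofReal (f s) := by
      intro s
      rw [← ENNReal.rpow_mul]
      have : (1 - ρ) * q = 1 := by
        rw [h1ρ, hqdef]
        field_simp
        exact div_self (by linarith)
      rw [this, ENNReal.rpow_one]
    calc ∫⁻ s, ENNReal.ofReal (K₁ t s * f s) ∂μ
        ≤ _ := step1
      _ = _ := step2
      _ ≤ ENNReal.ofReal (f t) ^ ρ *
          ((∫⁻ s, ENNReal.ofReal (K₁ t s) ^ p ∂μ) ^ (1/p) *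
            (∫⁻ s, (ENNReal.ofReal (f s) ^ (1 - ρ)) ^ q ∂μ) ^ (1/q)) := by
          gcongr
      _ = _ := by
          simp_rw [hKp, hfq]
  -- convert to real integrals
  have hKfnn : ∀ s, 0 ≤ K₁ t s * f s := fun s => mul_nonneg (hKnn t s) (hfnn s)
  have hI : ∫ s in Ioc (0:ℝ) t, K₁ t s * f s
      = (∫⁻ s, ENNReal.ofReal (K₁ t s * f s) ∂μ).toReal := by
    rw [hμdef, integral_eq_lintegral_of_nonneg_ae (ae_of_all _ hKfnn)
      ((hKmeas t).mul hfmeas).aestronglyMeasurable]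
  have hA : ∫ s in Ioc (0:ℝ) t, K₁ t s ^ p
      = (∫⁻ s, ENNReal.ofReal (K₁ t s ^ p) ∂μ).toReal := by
    rw [hμdef, integral_eq_lintegral_of_nonneg_ae
      (ae_of_all _ fun s => Real.rpow_nonneg (hKnn t s) p)
      (((hKmeas t).pow_const p).aestronglyMeasurable)]
  have hB : ∫ s in Ioc (0:ℝ) t, f s
      = (∫⁻ s, ENNReal.ofReal (f s) ∂μ).toReal := by
    rw [hμdef, integral_eq_lintegral_of_nonneg_ae (ae_of_all _ hfnn)
      hfmeas.aestronglyMeasurable]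
  have hAfin : (∫⁻ s, ENNReal.ofReal (K₁ t s ^ p) ∂μ) ≠ ⊤ := hKint'.lintegral_lt_top.ne
  have hBfin : (∫⁻ s, ENNReal.ofReal (f s) ∂μ) ≠ ⊤ := hfint'.lintegral_lt_top.ne
  have hRfin : ENNReal.ofReal (f t) ^ ρ *
      ((∫⁻ s, ENNReal.ofReal (K₁ t s ^ p) ∂μ) ^ (1/p) *
        (∫⁻ s, ENNReal.ofReal (f s) ∂μ) ^ (1/q)) ≠ ⊤ := by
    apply ENNReal.mul_ne_top
    · exact ENNReal.rpow_ne_top_of_nonneg hρpos.le ENNReal.ofReal_ne_top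
    apply ENNReal.mul_ne_top
    · exact ENNReal.rpow_ne_top_of_nonneg (one_div_nonneg.mpr hpq.pos.le) hAfin
    · exact ENNReal.rpow_ne_top_of_nonneg (one_div_nonneg.mpr hpq.symm.pos.le) hBfin
  set F : ℝ := ∫ s in Ioc (0:ℝ) t, K₁ t s ^ p with hFdef
  set G : ℝ := ∫ s in Ioc (0:ℝ) t, f s with hGdef
  have hFnn : 0 ≤ F := by
    rw [hFdef]
    exact integral_nonneg fun s => Real.rpow_nonneg (hKnn t s) p
  have hGnn : 0 ≤ G := by
    rw [hGdef]
    exact integral_nonneg hfnn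
  have main : ∫ s in Ioc (0:ℝ) t, K₁ t s * f s ≤ f t ^ ρ * (F ^ (1/p) * G ^ (1/q)) := by
    rw [hI]
    calc (∫⁻ s, ENNReal.ofReal (K₁ t s * f s) ∂μ).toReal
        ≤ (ENNReal.ofReal (f t) ^ ρ *
            ((∫⁻ s, ENNReal.ofReal (K₁ t s ^ p) ∂μ) ^ (1/p) *
              (∫⁻ s, ENNReal.ofReal (f s) ∂μ) ^ (1/q))).toReal :=
          ENNReal.toReal_mono hRfin key
      _ = f t ^ ρ * (F ^ (1/p) * G ^ (1/q)) := by
          rw [ENNReal.toReal_mul, ENNReal.toReal_mul, ← ENNReal.toReal_rpow,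
            ← ENNReal.toReal_rpow, ← ENNReal.toReal_rpow,
            ENNReal.toReal_ofReal (hfnn t), ← hA, ← hB]
  refine main.trans ?_
  rw [hpρ, hqρ]
  have h1p : 1/p = ρ := by rw [← hpρ]; field_simp
  have h1q : 1/q = 1 - ρ := by rw [← hqρ]; field_simp
  rw [h1p, h1q]
  have young : f t ^ ρ * G ^ (1 - ρ) ≤ ρ * f t / a ^ p + (1 - ρ) * a ^ q * G := by
    have hx : (0:ℝ) ≤ f t / a ^ p := div_nonneg (hfnn t) (Real.rpow_nonneg ha.le p)
    have hy : (0:ℝ) ≤ a ^ q * G := mul_nonneg (Real.rpow_nonneg ha.le q) hGnn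
    have hyoung := Real.geom_mean_le_arith_mean2_weighted hρpos.le
      (by linarith : (0:ℝ) ≤ 1 - ρ) hx hy (by ring)
    have heq : (f t / a ^ p) ^ ρ * (a ^ q * G) ^ (1 - ρ) = f t ^ ρ * G ^ (1 - ρ) := by
      rw [Real.div_rpow (hfnn t) (Real.rpow_nonneg ha.le p),
        Real.mul_rpow (Real.rpow_nonneg ha.le q) hGnn,
        ← Real.rpow_mul ha.le, ← Real.rpow_mul ha.le]
      have hp1 : p * ρ = 1 := by rw [hpdef, hρdef]; field_simp
      have hq1 : q * (1 - ρ) = 1 := by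
        rw [hqdef, h1ρ]
        rw [div_mul_div_comm]
        have h2 : 2 * β * (β - 1) = (β - 1) * (2 * β) := by ring
        rw [h2]
        exact div_self (ne_of_gt (by nlinarith))
      rw [hp1, hq1, Real.rpow_one]
      have ha' : a ≠ 0 := ha.ne'
      field_simp
    rw [heq] at hyoung
    calc f t ^ ρ * G ^ (1 - ρ) ≤ ρ * (f t / a ^ p) + (1 - ρ) * (a ^ q * G) := hyoung
      _ = ρ * f t / a ^ p + (1 - ρ) * a ^ q * G := by ring
  calc f t ^ ρ * (F ^ ρ * G ^ (1 - ρ))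
      = F ^ ρ * (f t ^ ρ * G ^ (1 - ρ)) := by ring
    _ ≤ F ^ ρ * (ρ * f t / a ^ p + (1 - ρ) * a ^ q * G) := by
        exact mul_le_mul_of_nonneg_left young (Real.rpow_nonneg hFnn ρ)
end

section
/- Bound on Volterra integrals (diffusion case): Let f : [0,T] → ℝ≥0 be Borel, locally bounded, non-decreasing, and let K₂ satisfy sup_{t∈[0,T]} ∫₀ᵗ K₂(t,s)^{2β} ds < ∞ for some β > 1. Then for every a > 0, with ρ = (β+1)/(2β), for all t ∈ [0,T]: (∫₀ᵗ K₂(t,s)² f(s)² ds)^{1/2} ≤ ψ(t) ( ρ·f(t)/a^{1/ρ} + (1−ρ)·a^{1/(1−ρ)} ∫₀ᵗ f(s) ds ), where ψ(t) = (∫₀ᵗ K₂(t,s)^{2β} ds)^{1/(2β)}. -/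
open MeasureTheory Set

/-- Bound on Volterra integrals, diffusion case: for non-decreasing `f ≥ 0` and a kernel `K₂`
with `∫₀ᵗ K₂(t,s)^{2β} ds < ∞`, with `ρ = (β+1)/(2β)`, for every `a > 0`:
`(∫₀ᵗ K₂(t,s)² f(s)² ds)^{1/2} ≤ ψ(t)(ρ f(t)/a^{1/ρ} + (1-ρ) a^{1/(1-ρ)} ∫₀ᵗ f(s) ds)`. -/
theorem volterra_integral_bound_diffusion
    (T β : ℝ) (hT : 0 < T) (hβ : 1 < β)
    (K₂ : ℝ → ℝ → ℝ) (hKnn : ∀ t s, 0 ≤ K₂ t s)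
    (hKmeas : ∀ t, Measurable (K₂ t))
    (hKint : ∀ t ∈ Icc (0 : ℝ) T,
      IntegrableOn (fun s => K₂ t s ^ (2 * β)) (Ioc 0 t))
    (f : ℝ → ℝ) (hfnn : ∀ t, 0 ≤ f t) (hfmeas : Measurable f)
    (hfint : IntegrableOn f (Icc 0 T))
    (hfmono : MonotoneOn f (Icc 0 T))
    (hKf : ∀ t ∈ Icc (0 : ℝ) T,
      IntegrableOn (fun s => K₂ t s ^ (2 : ℕ) * f s ^ (2 : ℕ)) (Ioc 0 t)) :
    ∀ a : ℝ, 0 < a → ∀ t ∈ Icc (0 : ℝ) T,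
      (∫ s in Ioc (0 : ℝ) t, K₂ t s ^ (2 : ℕ) * f s ^ (2 : ℕ)) ^ ((1 : ℝ) / 2) ≤
        (∫ s in Ioc (0 : ℝ) t, K₂ t s ^ (2 * β)) ^ (1 / (2 * β)) *
          (((β + 1) / (2 * β)) * f t / a ^ (1 / ((β + 1) / (2 * β)))
            + (1 - (β + 1) / (2 * β)) * a ^ (1 / (1 - (β + 1) / (2 * β)))
              * ∫ s in Ioc (0 : ℝ) t, f s) := by
  intro a ha t ht
  obtain ⟨ht0, htT⟩ := ht
  have hβ0 : (0:ℝ) < β := lt_trans one_pos hβ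
  set q : ℝ := β / (β - 1) with hq_def
  have hpq : Real.HolderConjugate β q := (Real.holderConjugate_iff_eq_conjExponent hβ).2 rfl
  have hq1 : 1 < q := hpq.symm.lt
  have hq0 : (0:ℝ) < q := lt_trans one_pos hq1
  have htmem : t ∈ Icc (0:ℝ) T := ⟨ht0, htT⟩
  have hsub : Ioc (0:ℝ) t ⊆ Icc 0 T := fun s hs => ⟨le_of_lt hs.1, hs.2.trans htT⟩
  have hfle : ∀ s ∈ Ioc (0:ℝ) t, f s ≤ f t := fun s hs => hfmono (hsub hs) htmem hs.2
  have hF : 0 ≤ f t := hfnn t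
  set μ := volume.restrict (Ioc (0:ℝ) t) with hμ_def
  -- Notation for the key quantities
  set A : ℝ := ∫ s in Ioc (0:ℝ) t, K₂ t s ^ (2 * β) with hA_def
  set B : ℝ := ∫ s in Ioc (0:ℝ) t, f s with hB_def
  have hA : 0 ≤ A := setIntegral_nonneg measurableSet_Ioc
    (fun s _ => Real.rpow_nonneg (hKnn t s) _)
  have hB : 0 ≤ B := setIntegral_nonneg measurableSet_Ioc (fun s _ => hfnn s)
  -- rewriting powers of nonneg numbers
  have hKpow : ∀ s : ℝ, (K₂ t s ^ (2:ℕ) : ℝ) ^ β = K₂ t s ^ (2 * β) := by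
    intro s
    rw [← Real.rpow_natCast (K₂ t s) 2, ← Real.rpow_mul (hKnn t s)]
    norm_num
  have hfpow : ∀ s : ℝ, (f s ^ (2:ℕ) : ℝ) ^ q = f s ^ (2 * q) := by
    intro s
    rw [← Real.rpow_natCast (f s) 2, ← Real.rpow_mul (hfnn s)]
    norm_num
  -- Integrability of f on Ioc 0 t
  have hfint' : IntegrableOn f (Ioc 0 t) := hfint.mono_set hsub
  -- pointwise bound for f ^ (2q)
  have hptwise : ∀ s ∈ Ioc (0:ℝ) t, f s ^ (2 * q) ≤ f t ^ (2 * q - 1) * f s := by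
    intro s hs
    have h2q : (0:ℝ) < 2 * q - 1 := by linarith
    have h1 : f s ^ (2 * q) = f s ^ (2 * q - 1) * f s := by
      rcases eq_or_lt_of_le (hfnn s) with h0 | h0
      · rw [← h0]
        rw [Real.zero_rpow (by positivity), Real.zero_rpow (ne_of_gt h2q), zero_mul]
      · rw [show (2 * q : ℝ) = (2 * q - 1) + 1 by ring, Real.rpow_add h0, Real.rpow_one]
        ring_nf
    rw [h1]
    exact mul_le_mul_of_nonneg_right
      (Real.rpow_le_rpow (hfnn s) (hfle s hs) (le_of_lt h2q)) (hfnn s)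
  -- Integrability of f ^ (2q) on Ioc 0 t
  have hf2q_int : Integrable (fun s => (f s ^ (2:ℕ) : ℝ) ^ q) μ := by
    refine Integrable.mono' ((hfint'.const_mul (f t ^ (2 * q - 1)))) ?_ ?_
    · exact ((hfmeas.pow_const 2).pow measurable_const).aestronglyMeasurable
    · filter_upwards [ae_restrict_mem measurableSet_Ioc] with s hs
      rw [Real.norm_of_nonneg (Real.rpow_nonneg (by positivity) _), hfpow s]
      exact hptwise s hs
  -- Step 1: Hölder's inequality
  have hK2 : MemLp (fun s => (K₂ t s ^ (2:ℕ) : ℝ)) (ENNReal.ofReal β) μ := by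
    have hmeas : AEStronglyMeasurable (fun s => (K₂ t s ^ (2:ℕ) : ℝ)) μ :=
      ((hKmeas t).pow_const 2).aestronglyMeasurable
    have hne : ENNReal.ofReal β ≠ 0 := ne_of_gt (ENNReal.ofReal_pos.2 hβ0)
    refine (memLp_norm_rpow_iff hmeas hne ENNReal.ofReal_ne_top).1 ?_
    rw [ENNReal.div_self hne ENNReal.ofReal_ne_top, memLp_one_iff_integrable]
    have : (fun s => ‖(K₂ t s ^ (2:ℕ) : ℝ)‖ ^ (ENNReal.ofReal β).toReal)
        = fun s => K₂ t s ^ (2 * β) := by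
      funext s
      rw [ENNReal.toReal_ofReal (le_of_lt hβ0),
        Real.norm_of_nonneg (by positivity), hKpow s]
    rw [this]
    exact hKint t htmem
  have hf2 : MemLp (fun s => (f s ^ (2:ℕ) : ℝ)) (ENNReal.ofReal q) μ := by
    have hmeas : AEStronglyMeasurable (fun s => (f s ^ (2:ℕ) : ℝ)) μ :=
      (hfmeas.pow_const 2).aestronglyMeasurable
    have hne : ENNReal.ofReal q ≠ 0 := ne_of_gt (ENNReal.ofReal_pos.2 hq0)
    refine (memLp_norm_rpow_iff hmeas hne ENNReal.ofReal_ne_top).1 ?_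
    rw [ENNReal.div_self hne ENNReal.ofReal_ne_top, memLp_one_iff_integrable]
    have : (fun s => ‖(f s ^ (2:ℕ) : ℝ)‖ ^ (ENNReal.ofReal q).toReal)
        = fun s => (f s ^ (2:ℕ) : ℝ) ^ q := by
      funext s
      rw [ENNReal.toReal_ofReal (le_of_lt hq0), Real.norm_of_nonneg (by positivity)]
    rw [this]
    exact hf2q_int
  have holder := MeasureTheory.integral_mul_le_Lp_mul_Lq_of_nonneg hpq
    (μ := μ) (f := fun s => (K₂ t s ^ (2:ℕ) : ℝ)) (g := fun s => (f s ^ (2:ℕ) : ℝ))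
    (Filter.Eventually.of_forall (fun s => by positivity))
    (Filter.Eventually.of_forall (fun s => by positivity)) hK2 hf2
  -- Step 2: bound the second factor
  have hstep2 : (∫ s, (f s ^ (2:ℕ) : ℝ) ^ q ∂μ) ≤ f t ^ (2 * q - 1) * B := by
    have := integral_mono_of_nonneg
      (f := fun s => (f s ^ (2:ℕ) : ℝ) ^ q)
      (g := fun s => f t ^ (2 * q - 1) * f s) (μ := μ)
      (Filter.Eventually.of_forall (fun s => by positivity))
      (hfint'.const_mul (f t ^ (2 * q - 1)))
      ?_
    · rwa [integral_const_mul] at this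
    · filter_upwards [ae_restrict_mem measurableSet_Ioc] with s hs
      rw [hfpow s]
      exact hptwise s hs
  -- combine
  have hI2nn : (0:ℝ) ≤ ∫ s, (K₂ t s ^ (2:ℕ) : ℝ) * (f s ^ (2:ℕ) : ℝ) ∂μ :=
    integral_nonneg (fun s => by positivity)
  have hKint_eq : (∫ s, ((K₂ t s ^ (2:ℕ) : ℝ)) ^ β ∂μ) = A := by
    rw [hA_def]
    exact integral_congr_ae (Filter.Eventually.of_forall (fun s => hKpow s))
  have hfq_nn : (0:ℝ) ≤ ∫ s, (f s ^ (2:ℕ) : ℝ) ^ q ∂μ :=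
    integral_nonneg (fun s => by positivity)
  have hcomb : (∫ s, (K₂ t s ^ (2:ℕ) : ℝ) * (f s ^ (2:ℕ) : ℝ) ∂μ)
      ≤ A ^ (1/β) * (f t ^ (2 * q - 1) * B) ^ (1/q) := by
    refine holder.trans ?_
    rw [hKint_eq]
    exact mul_le_mul_of_nonneg_left
      (Real.rpow_le_rpow hfq_nn hstep2 (by positivity))
      (Real.rpow_nonneg hA _)
  -- take square roots
  have hsqrt : (∫ s, (K₂ t s ^ (2:ℕ) : ℝ) * (f s ^ (2:ℕ) : ℝ) ∂μ) ^ ((1:ℝ)/2)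
      ≤ A ^ (1/(2*β)) * (f t ^ ((β+1)/(2*β)) * B ^ (1 - (β+1)/(2*β))) := by
    have h1 := Real.rpow_le_rpow hI2nn hcomb (by norm_num : (0:ℝ) ≤ 1/2)
    refine h1.trans_eq ?_
    rw [Real.mul_rpow (Real.rpow_nonneg hA _) (Real.rpow_nonneg (by positivity) _),
      ← Real.rpow_mul hA, ← Real.rpow_mul (by positivity : (0:ℝ) ≤ f t ^ (2*q-1) * B),
      Real.mul_rpow (Real.rpow_nonneg hF _) hB,
      ← Real.rpow_mul hF]
    have hβ1 : β - 1 ≠ 0 := ne_of_gt (by linarith)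
    have hβne : β ≠ 0 := ne_of_gt hβ0
    have e1 : 1 / β * (1/2) = 1/(2*β) := by field_simp
    have e2 : (2 * q - 1) * (1/q * (1/2)) = (β+1)/(2*β) := by
      rw [hq_def]; field_simp; ring
    have e3 : 1/q * (1/2) = 1 - (β+1)/(2*β) := by
      rw [hq_def]; field_simp; ring
    rw [e1, e2, e3]
  -- Young's inequality step
  set ρ : ℝ := (β + 1) / (2 * β) with hρ_def
  have hρ0 : 0 < ρ := by rw [hρ_def]; positivity
  have hρ1 : ρ < 1 := by
    rw [hρ_def, div_lt_one (by positivity)]; linarith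
  have hyoung : f t ^ ρ * B ^ (1 - ρ)
      ≤ ρ * f t / a ^ (1/ρ) + (1 - ρ) * a ^ (1/(1-ρ)) * B := by
    have h := Real.geom_mean_le_arith_mean2_weighted (w₁ := ρ) (w₂ := 1 - ρ)
      (p₁ := f t / a ^ (1/ρ)) (p₂ := a ^ (1/(1-ρ)) * B)
      (le_of_lt hρ0) (by linarith) (by positivity) (by positivity) (by ring)
    have e1 : (f t / a ^ (1/ρ)) ^ ρ = f t ^ ρ / a := by
      rw [Real.div_rpow hF (Real.rpow_nonneg (le_of_lt ha) _),
        ← Real.rpow_mul (le_of_lt ha), one_div,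
        inv_mul_cancel₀ (ne_of_gt hρ0), Real.rpow_one]
    have e2 : (a ^ (1/(1-ρ)) * B) ^ (1-ρ) = a * B ^ (1-ρ) := by
      rw [Real.mul_rpow (Real.rpow_nonneg (le_of_lt ha) _) hB,
        ← Real.rpow_mul (le_of_lt ha), one_div,
        inv_mul_cancel₀ (by linarith : (1:ℝ) - ρ ≠ 0), Real.rpow_one]
    rw [e1, e2] at h
    calc f t ^ ρ * B ^ (1 - ρ) = (f t ^ ρ / a) * (a * B ^ (1-ρ)) := by
          field_simp
      _ ≤ ρ * (f t / a ^ (1/ρ)) + (1 - ρ) * (a ^ (1/(1-ρ)) * B) := h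
      _ = ρ * f t / a ^ (1/ρ) + (1 - ρ) * a ^ (1/(1-ρ)) * B := by ring
  -- conclude
  calc (∫ s in Ioc (0:ℝ) t, K₂ t s ^ (2:ℕ) * f s ^ (2:ℕ)) ^ ((1:ℝ)/2)
      ≤ A ^ (1/(2*β)) * (f t ^ ρ * B ^ (1 - ρ)) := hsqrt
    _ ≤ A ^ (1/(2*β)) * (ρ * f t / a ^ (1/ρ) + (1 - ρ) * a ^ (1/(1-ρ)) * B) :=
        mul_le_mul_of_nonneg_left hyoung (Real.rpow_nonneg hA _)
end

section
/- Generalized Grönwall lemma of Volterra type: Let f : [0,T] → ℝ≥0 be Borel, locally bounded, non-decreasing, and ψ : [0,T] → ℝ≥0 non-negative and non-decreasing. Assume kernels K₁, K₂ satisfy the integrability condition (K^{int}_β) for some β > 1, and that f(t) ≤ A ∫₀ᵗ K₁(t,s) f(s) ds + B (∫₀ᵗ K₂(t,s)² f(s)² ds)^{1/2} + ψ(t) for all t ∈ [0,T], with A, B > 0. Then f(t) ≤ 2 ψ(t) e^{K′ t} for all t ∈ [0,T], where K′ = 2^{1/(1−ρ)} (1−ρ) ρ^{ρ/(1−ρ)}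 (A φ* + B ψ*)^{1/(1−ρ)}, ρ = (β+1)/(2β), φ* = sup_t (∫₀ᵗ K₁(t,s)^{2β/(β+1)} ds)^{(β+1)/(2β)}, ψ* = sup_t (∫₀ᵗ K₂(t,s)^{2β} ds)^{1/(2β)}. -/
open MeasureTheory Set


lemma aux_rpow_le {x y q : ℝ} (hx : 0 ≤ x) (hxy : x ≤ y) (hq : 1 ≤ q) :
    x ^ q ≤ y ^ (q - 1) * x := by
  rcases eq_or_lt_of_le hx with h | h
  · rw [← h, Real.zero_rpow (by linarith), mul_zero]
  · calc x ^ q = x ^ (q - 1) * x := by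
          rw [← Real.rpow_add_one h.ne' (q - 1)]; ring_nf
      _ ≤ y ^ (q - 1) * x :=
          mul_le_mul_of_nonneg_right (Real.rpow_le_rpow hx hxy (by linarith)) hx

lemma aux_memLp {μ : Measure ℝ} {g : ℝ → ℝ} (hmeas : Measurable g) (hnn : ∀ x, 0 ≤ g x)
    {r : ℝ} (hr : 0 < r) (hint : Integrable (fun x => g x ^ r) μ) :
    MemLp g (ENNReal.ofReal r) μ := by
  have h0 : ENNReal.ofReal r ≠ 0 := by
    simp [ENNReal.ofReal_eq_zero, not_le, hr]
  have htop : ENNReal.ofReal r ≠ ⊤ := ENNReal.ofReal_ne_top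
  refine (memLp_norm_rpow_iff (q := ENNReal.ofReal r) (p := ENNReal.ofReal r)
    hmeas.aestronglyMeasurable h0 htop).mp ?_
  rw [ENNReal.div_self h0 htop]
  refine memLp_one_iff_integrable.mpr ?_
  have : (fun x => ‖g x‖ ^ (ENNReal.ofReal r).toReal) = fun x => g x ^ r := by
    funext x; rw [Real.norm_of_nonneg (hnn x), ENNReal.toReal_ofReal hr.le]
  rw [this]; exact hint

lemma aux_young {ρ C g I : ℝ} (hρ0 : 0 < ρ) (hρ1 : ρ < 1) (hC : 0 < C)
    (hg : 0 ≤ g) (hI : 0 ≤ I) :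
    C * (g ^ ρ * I ^ (1 - ρ)) ≤ g / 2
      + (2 ^ (1 / (1 - ρ)) * (1 - ρ) * ρ ^ (ρ / (1 - ρ)) * C ^ (1 / (1 - ρ)) / 2) * I := by
  have h1ρ : 0 < 1 - ρ := by linarith
  set e := ρ / (1 - ρ) with he
  set v := 2 * ρ * C with hv
  have hv0 : 0 < v := by positivity
  have hsplit : 1 / (1 - ρ) = 1 + e := by
    rw [he]; field_simp; ring
  have hgI : g ^ ρ * I ^ (1 - ρ) = (g / v) ^ ρ * (v ^ e * I) ^ (1 - ρ) := by
    rw [Real.div_rpow hg hv0.le, Real.mul_rpow (Real.rpow_nonneg hv0.le _) hI,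
      ← Real.rpow_mul hv0.le]
    have h2 : e * (1 - ρ) = ρ := by rw [he]; field_simp
    rw [h2]
    have hvρ : (0:ℝ) < v ^ ρ := Real.rpow_pos_of_pos hv0 _
    field_simp
  have hym : (g / v) ^ ρ * (v ^ e * I) ^ (1 - ρ) ≤ ρ * (g / v) + (1 - ρ) * (v ^ e * I) :=
    Real.geom_mean_le_arith_mean2_weighted hρ0.le h1ρ.le
      (div_nonneg hg hv0.le) (mul_nonneg (Real.rpow_nonneg hv0.le _) hI) (by ring)
  have hcoef : C * ((1 - ρ) * (v ^ e * I))
      = (2 ^ (1 / (1 - ρ)) * (1 - ρ) * ρ ^ e * C ^ (1 / (1 - ρ)) / 2) * I := by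
    have hve : v ^ e = 2 ^ e * ρ ^ e * C ^ e := by
      rw [hv, Real.mul_rpow (by positivity) hC.le,
        Real.mul_rpow (by norm_num) hρ0.le]
    have h2e : (2:ℝ) ^ (1 / (1 - ρ)) = 2 * 2 ^ e := by
      rw [hsplit, Real.rpow_add two_pos, Real.rpow_one]
    have hce : C ^ (1 / (1 - ρ)) = C * C ^ e := by
      rw [hsplit, Real.rpow_add hC, Real.rpow_one]
    rw [hve, h2e, hce]; ring
  calc C * (g ^ ρ * I ^ (1 - ρ)) = C * ((g / v) ^ ρ * (v ^ e * I) ^ (1 - ρ)) := by rw [hgI]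
    _ ≤ C * (ρ * (g / v) + (1 - ρ) * (v ^ e * I)) := by
        exact mul_le_mul_of_nonneg_left hym hC.le
    _ = C * (ρ * (g / v)) + C * ((1 - ρ) * (v ^ e * I)) := by ring
    _ = g / 2 + (2 ^ (1 / (1 - ρ)) * (1 - ρ) * ρ ^ e * C ^ (1 / (1 - ρ)) / 2) * I := by
        rw [hcoef, hv]
        field_simp

lemma aux_gronwall_iter {T K' : ℝ} (hK'0 : 0 ≤ K') {f ψ : ℝ → ℝ}
    (hfint : IntegrableOn f (Icc 0 T)) (hfmono : MonotoneOn f (Icc 0 T))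
    (hψmono : MonotoneOn ψ (Icc 0 T)) (hψnn : ∀ t, 0 ≤ ψ t)
    (key : ∀ t ∈ Icc (0:ℝ) T, f t ≤ 2 * ψ t + K' * ∫ s in Ioc (0:ℝ) t, f s) :
    ∀ t ∈ Icc (0:ℝ) T, f t ≤ 2 * ψ t * Real.exp (K' * t) := by
  intro t₀ ht₀
  have hsub : ∀ s : ℝ, s ∈ Icc (0:ℝ) T → Ioc (0:ℝ) s ⊆ Icc 0 T := fun s hs u hu =>
    ⟨hu.1.le, hu.2.trans hs.2⟩
  have hmain : ∀ n : ℕ, ∀ s ∈ Icc (0:ℝ) t₀,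
      f s ≤ 2 * ψ t₀ * (∑ k ∈ Finset.range n, (K' * s) ^ k / (k.factorial : ℝ))
        + f t₀ * ((K' * s) ^ n / (n.factorial : ℝ)) := by
    intro n
    induction n with
    | zero =>
      intro s hs
      have : f s ≤ f t₀ := hfmono ⟨hs.1, hs.2.trans ht₀.2⟩ ht₀ hs.2
      simpa using this
    | succ n ih =>
      intro s hs
      have hs' : s ∈ Icc (0:ℝ) T := ⟨hs.1, hs.2.trans ht₀.2⟩
      have h1 : f s ≤ 2 * ψ s + K' * ∫ u in Ioc (0:ℝ) s, f u := key s hs'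
      have hψs : ψ s ≤ ψ t₀ := hψmono hs' ht₀ hs.2
      have hcont : Continuous fun u : ℝ =>
          2 * ψ t₀ * (∑ k ∈ Finset.range n, (K' * u) ^ k / (k.factorial : ℝ))
            + f t₀ * ((K' * u) ^ n / (n.factorial : ℝ)) := by fun_prop
      have h2 : ∫ u in Ioc (0:ℝ) s, f u ≤ ∫ u in Ioc (0:ℝ) s,
          (2 * ψ t₀ * (∑ k ∈ Finset.range n, (K' * u) ^ k / (k.factorial : ℝ))
            + f t₀ * ((K' * u) ^ n / (n.factorial : ℝ))) := by
        refine setIntegral_mono_on (hfint.mono_set (hsub s hs'))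
          (hcont.integrableOn_Ioc) measurableSet_Ioc ?_
        intro u hu
        exact ih u ⟨hu.1.le, hu.2.trans hs.2⟩
      have hint_pow : ∀ m : ℕ, ∫ u in (0:ℝ)..s, (K' * u) ^ m / (m.factorial : ℝ)
          = K' ^ m * s ^ (m + 1) / ((m + 1) * (m.factorial : ℝ)) := by
        intro m
        have : (fun u : ℝ => (K' * u) ^ m / (m.factorial : ℝ))
            = fun u : ℝ => (K' ^ m / (m.factorial : ℝ)) * u ^ m := by
          funext u; rw [mul_pow]; ring
        rw [this, intervalIntegral.integral_const_mul, integral_pow,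
          zero_pow (by omega : m + 1 ≠ 0)]
        rw [sub_zero]
        have hm : ((m:ℝ) + 1) ≠ 0 := by positivity
        have hf : ((m.factorial : ℝ)) ≠ 0 := by positivity
        rw [div_mul_div_comm, div_eq_div_iff (by positivity) (by positivity)]
        ring
      have h3 : ∫ u in Ioc (0:ℝ) s,
          (2 * ψ t₀ * (∑ k ∈ Finset.range n, (K' * u) ^ k / (k.factorial : ℝ))
            + f t₀ * ((K' * u) ^ n / (n.factorial : ℝ)))
          = 2 * ψ t₀ * (∑ k ∈ Finset.range n, K' ^ k * s ^ (k + 1) / ((k + 1) * (k.factorial : ℝ)))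
            + f t₀ * (K' ^ n * s ^ (n + 1) / ((n + 1) * (n.factorial : ℝ))) := by
        rw [← intervalIntegral.integral_of_le hs.1]
        have hc1 : Continuous fun u : ℝ =>
            2 * ψ t₀ * (∑ k ∈ Finset.range n, (K' * u) ^ k / (k.factorial : ℝ)) := by fun_prop
        have hc2 : Continuous fun u : ℝ => f t₀ * ((K' * u) ^ n / (n.factorial : ℝ)) := by
          fun_prop
        rw [intervalIntegral.integral_add (hc1.intervalIntegrable _ _)
          (hc2.intervalIntegrable _ _), intervalIntegral.integral_const_mul,
          intervalIntegral.integral_const_mul, intervalIntegral.integral_finset_sum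
            (fun k _ => ((by fun_prop : Continuous fun u : ℝ =>
              (K' * u) ^ k / (k.factorial : ℝ))).intervalIntegrable _ _)]
        simp_rw [hint_pow]
      -- combine
      have h4 : f s ≤ 2 * ψ t₀
          + K' * (2 * ψ t₀ * (∑ k ∈ Finset.range n,
              K' ^ k * s ^ (k + 1) / ((k + 1) * (k.factorial : ℝ)))
            + f t₀ * (K' ^ n * s ^ (n + 1) / ((n + 1) * (n.factorial : ℝ)))) := by
        have := mul_le_mul_of_nonneg_left h2 hK'0
        rw [h3] at this
        linarith
      have hterm : ∀ k : ℕ, (K' * s) ^ (k + 1) / ((k + 1).factorial : ℝ)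
          = K' * (K' ^ k * s ^ (k + 1) / ((k + 1) * (k.factorial : ℝ))) := by
        intro k
        rw [Nat.factorial_succ, mul_pow]
        push_cast
        have h1 : ((k:ℝ) + 1) ≠ 0 := by positivity
        have h2 : ((k.factorial : ℝ)) ≠ 0 := by positivity
        field_simp
        ring
      have hsum2 : (∑ k ∈ Finset.range (n+1), (K' * s) ^ k / (k.factorial : ℝ))
          = K' * (∑ k ∈ Finset.range n, K' ^ k * s ^ (k + 1)
              / ((k + 1) * (k.factorial : ℝ))) + 1 := by
        rw [Finset.sum_range_succ']
        simp only [hterm, pow_zero, Nat.factorial_zero, Nat.cast_one, div_one]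
        rw [Finset.mul_sum]
      refine h4.trans (le_of_eq ?_)
      rw [hsum2, hterm n]
      push_cast
      ring
  -- pass to the limit
  have hlim : ∀ n : ℕ, f t₀ ≤ 2 * ψ t₀ * Real.exp (K' * t₀)
      + f t₀ * ((K' * t₀) ^ n / (n.factorial : ℝ)) := by
    intro n
    refine (hmain n t₀ ⟨ht₀.1, le_refl _⟩).trans ?_
    have h1 : (∑ k ∈ Finset.range n, (K' * t₀) ^ k / (k.factorial : ℝ))
        ≤ Real.exp (K' * t₀) := Real.sum_le_exp_of_nonneg (mul_nonneg hK'0 ht₀.1) n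
    have h2 : (0:ℝ) ≤ 2 * ψ t₀ := by have := hψnn t₀; linarith
    nlinarith
  have htend : Filter.Tendsto (fun n : ℕ => 2 * ψ t₀ * Real.exp (K' * t₀)
      + f t₀ * ((K' * t₀) ^ n / (n.factorial : ℝ))) Filter.atTop
      (nhds (2 * ψ t₀ * Real.exp (K' * t₀))) := by
    have := (FloorSemiring.tendsto_pow_div_factorial_atTop (K' * t₀)).const_mul (f t₀)
    simpa using Filter.Tendsto.const_add (2 * ψ t₀ * Real.exp (K' * t₀)) this
  exact ge_of_tendsto' htend hlim

/-- Generalized Grönwall lemma of Volterra type: if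
`f(t) ≤ A ∫₀ᵗ K₁(t,s) f(s) ds + B (∫₀ᵗ K₂(t,s)² f(s)² ds)^{1/2} + ψ(t)`
with kernels satisfying the integrability condition `(K^int_β)`, then
`f(t) ≤ 2 ψ(t) e^{K' t}` with the explicit constant `K'`. -/
theorem generalized_gronwall_volterra
    (T β A B : ℝ) (hT : 0 < T) (hβ : 1 < β) (hA : 0 < A) (hB : 0 < B)
    (K₁ K₂ : ℝ → ℝ → ℝ) (hK1nn : ∀ t s, 0 ≤ K₁ t s) (hK2nn : ∀ t s, 0 ≤ K₂ t s)
    (hK1meas : ∀ t, Measurable (K₁ t)) (hK2meas : ∀ t, Measurable (K₂ t))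
    (hKint : ∀ t ∈ Icc (0 : ℝ) T,
      IntegrableOn (fun s => K₁ t s ^ (2 * β / (β + 1)) + K₂ t s ^ (2 * β)) (Ioc 0 t))
    (M : ℝ)
    (hM : ∀ t ∈ Icc (0 : ℝ) T,
      ∫ s in Ioc (0 : ℝ) t, (K₁ t s ^ (2 * β / (β + 1)) + K₂ t s ^ (2 * β)) ≤ M)
    (f : ℝ → ℝ) (hfnn : ∀ t, 0 ≤ f t) (hfmeas : Measurable f)
    (hfint : IntegrableOn f (Icc 0 T)) (hfmono : MonotoneOn f (Icc 0 T))
    (ψ : ℝ → ℝ) (hψnn : ∀ t, 0 ≤ ψ t) (hψmono : MonotoneOn ψ (Icc 0 T))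
    (hineq : ∀ t ∈ Icc (0 : ℝ) T,
      f t ≤ A * (∫ s in Ioc (0 : ℝ) t, K₁ t s * f s)
        + B * (∫ s in Ioc (0 : ℝ) t, K₂ t s ^ (2 : ℕ) * f s ^ (2 : ℕ)) ^ ((1 : ℝ) / 2)
        + ψ t)
    (ρ : ℝ) (hρ : ρ = (β + 1) / (2 * β))
    (φstar : ℝ)
    (hφstar : φstar = ⨆ t : Icc (0 : ℝ) T,
      (∫ s in Ioc (0 : ℝ) (t : ℝ), K₁ (t : ℝ) s ^ (2 * β / (β + 1))) ^ ((β + 1) / (2 * β)))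
    (ψstar : ℝ)
    (hψstar : ψstar = ⨆ t : Icc (0 : ℝ) T,
      (∫ s in Ioc (0 : ℝ) (t : ℝ), K₂ (t : ℝ) s ^ (2 * β)) ^ (1 / (2 * β)))
    (K' : ℝ)
    (hK' : K' = 2 ^ (1 / (1 - ρ)) * (1 - ρ) * ρ ^ (ρ / (1 - ρ))
      * (A * φstar + B * ψstar) ^ (1 / (1 - ρ))) :
    ∀ t ∈ Icc (0 : ℝ) T, f t ≤ 2 * ψ t * Real.exp (K' * t) := by
  have hβ0 : (0:ℝ) < β := by linarith
  have hβm1 : (0:ℝ) < β - 1 := by linarith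
  have hβne : β ≠ 0 := hβ0.ne'
  have hβm1ne : β - 1 ≠ 0 := hβm1.ne'
  have hβp1 : (0:ℝ) < β + 1 := by linarith
  have hρ0 : 0 < ρ := by rw [hρ]; positivity
  have hρ1 : ρ < 1 := by
    rw [hρ, div_lt_one (by positivity)]; linarith
  have h1ρ : 0 < 1 - ρ := by linarith
  -- individual integrability of kernel powers
  have hK1meas' : ∀ t, Measurable fun s => K₁ t s ^ (2 * β / (β + 1)) := fun t =>
    (Real.continuous_rpow_const (by positivity)).measurable.comp (hK1meas t)
  have hK2meas' : ∀ t, Measurable fun s => K₂ t s ^ (2 * β) := fun t =>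
    (Real.continuous_rpow_const (by positivity)).measurable.comp (hK2meas t)
  have hK1p_int : ∀ t ∈ Icc (0:ℝ) T,
      IntegrableOn (fun s => K₁ t s ^ (2 * β / (β + 1))) (Ioc 0 t) := by
    intro t ht
    refine (hKint t ht).mono' (hK1meas' t).aestronglyMeasurable ?_
    refine Filter.Eventually.of_forall fun s => ?_
    rw [Real.norm_of_nonneg (Real.rpow_nonneg (hK1nn t s) _)]
    have := Real.rpow_nonneg (hK2nn t s) (2*β)
    linarith
  have hK2p_int : ∀ t ∈ Icc (0:ℝ) T,
      IntegrableOn (fun s => K₂ t s ^ (2 * β)) (Ioc 0 t) := by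
    intro t ht
    refine (hKint t ht).mono' (hK2meas' t).aestronglyMeasurable ?_
    refine Filter.Eventually.of_forall fun s => ?_
    rw [Real.norm_of_nonneg (Real.rpow_nonneg (hK2nn t s) _)]
    have := Real.rpow_nonneg (hK1nn t s) (2 * β / (β + 1))
    linarith
  -- suprema bounds
  have hφle : ∀ t ∈ Icc (0:ℝ) T,
      (∫ s in Ioc (0:ℝ) t, K₁ t s ^ (2 * β / (β + 1))) ^ ((β + 1) / (2 * β)) ≤ φstar := by
    intro t ht
    rw [hφstar]
    have hbdd : BddAbove (Set.range fun t' : Icc (0:ℝ) T =>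
        (∫ s in Ioc (0:ℝ) (t':ℝ), K₁ (t':ℝ) s ^ (2 * β / (β + 1))) ^ ((β + 1) / (2 * β))) := by
      refine ⟨(max M 0) ^ ((β + 1) / (2 * β)), ?_⟩
      rintro x ⟨t', rfl⟩
      refine Real.rpow_le_rpow
        (integral_nonneg fun s => Real.rpow_nonneg (hK1nn _ _) _) ?_ (by positivity)
      refine le_trans (le_trans ?_ (hM t' t'.2)) (le_max_left M 0)
      refine integral_mono_of_nonneg
        (Filter.Eventually.of_forall fun s => Real.rpow_nonneg (hK1nn _ _) _)
        (hKint t' t'.2) (Filter.Eventually.of_forall fun s => ?_)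
      have := Real.rpow_nonneg (hK2nn (t':ℝ) s) (2*β)
      simp only
      linarith
    exact le_ciSup hbdd ⟨t, ht⟩
  have hψle : ∀ t ∈ Icc (0:ℝ) T,
      (∫ s in Ioc (0:ℝ) t, K₂ t s ^ (2 * β)) ^ (1 / (2 * β)) ≤ ψstar := by
    intro t ht
    rw [hψstar]
    have hbdd : BddAbove (Set.range fun t' : Icc (0:ℝ) T =>
        (∫ s in Ioc (0:ℝ) (t':ℝ), K₂ (t':ℝ) s ^ (2 * β)) ^ (1 / (2 * β))) := by
      refine ⟨(max M 0) ^ (1 / (2 * β)), ?_⟩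
      rintro x ⟨t', rfl⟩
      refine Real.rpow_le_rpow
        (integral_nonneg fun s => Real.rpow_nonneg (hK2nn _ _) _) ?_ (by positivity)
      refine le_trans (le_trans ?_ (hM t' t'.2)) (le_max_left M 0)
      refine integral_mono_of_nonneg
        (Filter.Eventually.of_forall fun s => Real.rpow_nonneg (hK2nn _ _) _)
        (hKint t' t'.2) (Filter.Eventually.of_forall fun s => ?_)
      have := Real.rpow_nonneg (hK1nn (t':ℝ) s) (2 * β / (β + 1))
      simp only
      linarith
    exact le_ciSup hbdd ⟨t, ht⟩
  have h0T : (0:ℝ) ∈ Icc (0:ℝ) T := ⟨le_refl 0, hT.le⟩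
  have hφ0 : 0 ≤ φstar :=
    le_trans (Real.rpow_nonneg (integral_nonneg fun s => Real.rpow_nonneg (hK1nn _ _) _) _)
      (hφle 0 h0T)
  have hψ0 : 0 ≤ ψstar :=
    le_trans (Real.rpow_nonneg (integral_nonneg fun s => Real.rpow_nonneg (hK2nn _ _) _) _)
      (hψle 0 h0T)
  have hC0 : 0 ≤ A * φstar + B * ψstar :=
    add_nonneg (mul_nonneg hA.le hφ0) (mul_nonneg hB.le hψ0)
  have hK'0 : 0 ≤ K' := by
    rw [hK']
    exact mul_nonneg (mul_nonneg (mul_nonneg (Real.rpow_nonneg (by norm_num) _) h1ρ.le)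
      (Real.rpow_nonneg hρ0.le _)) (Real.rpow_nonneg hC0 _)
  -- the key linear integral inequality
  have key : ∀ t ∈ Icc (0:ℝ) T, f t ≤ 2 * ψ t + K' * ∫ s in Ioc (0:ℝ) t, f s := by
    intro t ht
    have hsubt : Ioc (0:ℝ) t ⊆ Icc 0 T := fun u hu => ⟨hu.1.le, hu.2.trans ht.2⟩
    haveI : IsFiniteMeasure (volume.restrict (Ioc (0:ℝ) t)) :=
      ⟨by rw [Measure.restrict_apply_univ]; exact measure_Ioc_lt_top⟩
    have hfle : ∀ s ∈ Ioc (0:ℝ) t, f s ≤ f t := fun s hs => hfmono (hsubt hs) ht hs.2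
    -- conjugate exponents
    have hpconj : Real.HolderConjugate (2*β/(β+1)) (2*β/(β-1)) := by
      rw [Real.holderConjugate_iff]; constructor
      · rw [lt_div_iff₀ (by positivity)]; linarith
      · rw [inv_div, inv_div, ← add_div, div_eq_one_iff_eq (by positivity : (2*β) ≠ 0)]
        ring
    have hβconj : Real.HolderConjugate β (β/(β-1)) := by
      refine Real.holderConjugate_iff.mpr ⟨hβ, ?_⟩
      rw [inv_div]
      field_simp
      ring
    -- MemLp facts
    have hftop : MemLp f ⊤ (volume.restrict (Ioc (0:ℝ) t)) := by
      refine memLp_top_of_bound hfmeas.aestronglyMeasurable (f t) ?_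
      refine (ae_restrict_iff' measurableSet_Ioc).2 (Filter.Eventually.of_forall fun s hs => ?_)
      rw [Real.norm_of_nonneg (hfnn s)]
      exact hfle s hs
    have hfq_mem : MemLp f (ENNReal.ofReal (2*β/(β-1))) (volume.restrict (Ioc (0:ℝ) t)) :=
      hftop.mono_exponent le_top
    have hf2top : MemLp (fun s => f s ^ (2:ℕ)) ⊤ (volume.restrict (Ioc (0:ℝ) t)) := by
      refine memLp_top_of_bound (hfmeas.pow_const 2).aestronglyMeasurable (f t ^ (2:ℕ)) ?_
      refine (ae_restrict_iff' measurableSet_Ioc).2 (Filter.Eventually.of_forall fun s hs => ?_)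
      rw [Real.norm_of_nonneg (pow_nonneg (hfnn s) 2)]
      exact pow_le_pow_left₀ (hfnn s) (hfle s hs) 2
    have hf2_mem : MemLp (fun s => f s ^ (2:ℕ)) (ENNReal.ofReal (β/(β-1)))
        (volume.restrict (Ioc (0:ℝ) t)) := hf2top.mono_exponent le_top
    have hK1_mem : MemLp (K₁ t) (ENNReal.ofReal (2*β/(β+1)))
        (volume.restrict (Ioc (0:ℝ) t)) :=
      aux_memLp (hK1meas t) (hK1nn t) (by positivity) (hK1p_int t ht)
    have hK2sq_mem : MemLp (fun s => K₂ t s ^ (2:ℕ)) (ENNReal.ofReal β)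
        (volume.restrict (Ioc (0:ℝ) t)) := by
      refine aux_memLp ((hK2meas t).pow_const 2) (fun s => pow_nonneg (hK2nn t s) 2) hβ0 ?_
      have heq : (fun s => (K₂ t s ^ (2:ℕ)) ^ β) = fun s => K₂ t s ^ (2*β) := by
        funext s
        rw [← Real.rpow_natCast (K₂ t s) 2, ← Real.rpow_mul (hK2nn t s)]
        norm_num
      rw [heq]
      exact hK2p_int t ht
    -- Hölder inequalities
    have hH1 : ∫ s in Ioc (0:ℝ) t, K₁ t s * f s
        ≤ (∫ s in Ioc (0:ℝ) t, K₁ t s ^ (2*β/(β+1))) ^ (1/(2*β/(β+1)))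
          * (∫ s in Ioc (0:ℝ) t, f s ^ (2*β/(β-1))) ^ (1/(2*β/(β-1))) :=
      integral_mul_le_Lp_mul_Lq_of_nonneg hpconj
        (Filter.Eventually.of_forall fun s => hK1nn t s)
        (Filter.Eventually.of_forall fun s => hfnn s) hK1_mem hfq_mem
    have hH2 : ∫ s in Ioc (0:ℝ) t, K₂ t s ^ (2:ℕ) * f s ^ (2:ℕ)
        ≤ (∫ s in Ioc (0:ℝ) t, (K₂ t s ^ (2:ℕ)) ^ β) ^ (1/β)
          * (∫ s in Ioc (0:ℝ) t, (f s ^ (2:ℕ)) ^ (β/(β-1))) ^ (1/(β/(β-1))) :=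
      integral_mul_le_Lp_mul_Lq_of_nonneg hβconj
        (Filter.Eventually.of_forall fun s => pow_nonneg (hK2nn t s) 2)
        (Filter.Eventually.of_forall fun s => pow_nonneg (hfnn s) 2) hK2sq_mem hf2_mem
    set I := ∫ s in Ioc (0:ℝ) t, f s with hIdef
    have hI0 : 0 ≤ I := integral_nonneg fun s => hfnn s
    have hft0 : 0 ≤ f t := hfnn t
    -- bound the f-factor in Hölder 1
    have hfq_int : IntegrableOn (fun s => f s ^ (2*β/(β-1))) (Ioc 0 t) := by
      have h := hfq_mem.integrable_norm_rpow
        (by simp [ENNReal.ofReal_eq_zero, not_le]; positivity) ENNReal.ofReal_ne_top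
      have heq : (fun s => ‖f s‖ ^ (ENNReal.ofReal (2*β/(β-1))).toReal)
          = fun s => f s ^ (2*β/(β-1)) := by
        funext s
        rw [Real.norm_of_nonneg (hfnn s), ENNReal.toReal_ofReal (by positivity)]
      rwa [heq] at h
    have hq1 : (1:ℝ) ≤ 2*β/(β-1) := hpconj.symm.lt.le
    have hfquery : ∫ s in Ioc (0:ℝ) t, f s ^ (2*β/(β-1)) ≤ f t ^ (2*β/(β-1) - 1) * I := by
      have hmono := setIntegral_mono_on hfq_int
        (((hfint.mono_set hsubt)).const_mul (f t ^ (2*β/(β-1) - 1))) measurableSet_Ioc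
        (fun s hs => aux_rpow_le (hfnn s) (hfle s hs) hq1)
      rwa [integral_const_mul] at hmono
    have hfq_rpow : (∫ s in Ioc (0:ℝ) t, f s ^ (2*β/(β-1))) ^ (1/(2*β/(β-1)))
        ≤ f t ^ ρ * I ^ (1-ρ) := by
      refine le_trans (Real.rpow_le_rpow
        (integral_nonneg fun s => Real.rpow_nonneg (hfnn s) _) hfquery (by positivity)) ?_
      rw [Real.mul_rpow (Real.rpow_nonneg hft0 _) hI0, ← Real.rpow_mul hft0]
      have he1 : (2*β/(β-1) - 1) * (1/(2*β/(β-1))) = ρ := by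
        rw [hρ]; field_simp; ring
      have he2 : 1/(2*β/(β-1)) = 1 - ρ := by
        rw [one_div_div, hρ]; field_simp; ring
      rw [he1, he2]
    -- bound the f-factor in Hölder 2
    have hf2q_int : IntegrableOn (fun s => (f s ^ (2:ℕ)) ^ (β/(β-1))) (Ioc 0 t) := by
      have h := hf2_mem.integrable_norm_rpow
        (by simp [ENNReal.ofReal_eq_zero, not_le]; positivity) ENNReal.ofReal_ne_top
      have heq : (fun s => ‖f s ^ (2:ℕ)‖ ^ (ENNReal.ofReal (β/(β-1))).toReal)
          = fun s => (f s ^ (2:ℕ)) ^ (β/(β-1)) := by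
        funext s
        rw [Real.norm_of_nonneg (pow_nonneg (hfnn s) 2), ENNReal.toReal_ofReal (by positivity)]
      rwa [heq] at h
    have hf2step : ∀ s ∈ Ioc (0:ℝ) t,
        (f s ^ (2:ℕ)) ^ (β/(β-1)) ≤ f t ^ (2*(β/(β-1)) - 1) * f s := by
      intro s hs
      have h1 : (f s ^ (2:ℕ)) ^ (β/(β-1)) = f s ^ (2*(β/(β-1))) := by
        rw [← Real.rpow_natCast (f s) 2, ← Real.rpow_mul (hfnn s)]
        norm_num
      rw [h1]
      refine aux_rpow_le (hfnn s) (hfle s hs) ?_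
      have : (1:ℝ) < β/(β-1) := hβconj.symm.lt
      nlinarith
    have hf2query : ∫ s in Ioc (0:ℝ) t, (f s ^ (2:ℕ)) ^ (β/(β-1))
        ≤ f t ^ (2*(β/(β-1)) - 1) * I := by
      have hmono := setIntegral_mono_on hf2q_int
        (((hfint.mono_set hsubt)).const_mul (f t ^ (2*(β/(β-1)) - 1))) measurableSet_Ioc
        hf2step
      rwa [integral_const_mul] at hmono
    -- rewrite the kernel integral in Hölder 2
    have hK2rw : ∫ s in Ioc (0:ℝ) t, (K₂ t s ^ (2:ℕ)) ^ β
        = ∫ s in Ioc (0:ℝ) t, K₂ t s ^ (2*β) := by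
      refine integral_congr_ae (Filter.Eventually.of_forall fun s => ?_)
      show (K₂ t s ^ (2:ℕ)) ^ β = K₂ t s ^ (2*β)
      rw [← Real.rpow_natCast (K₂ t s) 2, ← Real.rpow_mul (hK2nn t s)]
      norm_num
    have hK2I0 : 0 ≤ ∫ s in Ioc (0:ℝ) t, K₂ t s ^ (2*β) :=
      integral_nonneg fun s => Real.rpow_nonneg (hK2nn t s) _
    -- full bound for the B-term
    have hBterm : (∫ s in Ioc (0:ℝ) t, K₂ t s ^ (2:ℕ) * f s ^ (2:ℕ)) ^ ((1:ℝ)/2)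
        ≤ ψstar * (f t ^ ρ * I ^ (1-ρ)) := by
      have hY0 : 0 ≤ ∫ s in Ioc (0:ℝ) t, K₂ t s ^ (2:ℕ) * f s ^ (2:ℕ) :=
        integral_nonneg fun s => mul_nonneg (pow_nonneg (hK2nn t s) 2) (pow_nonneg (hfnn s) 2)
      have hstep1 : ∫ s in Ioc (0:ℝ) t, K₂ t s ^ (2:ℕ) * f s ^ (2:ℕ)
          ≤ (∫ s in Ioc (0:ℝ) t, K₂ t s ^ (2*β)) ^ (1/β)
            * (f t ^ (2*(β/(β-1)) - 1) * I) ^ (1/(β/(β-1))) := by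
        rw [hK2rw] at hH2
        refine hH2.trans ?_
        refine mul_le_mul_of_nonneg_left ?_ (Real.rpow_nonneg hK2I0 _)
        exact Real.rpow_le_rpow
          (integral_nonneg fun s => Real.rpow_nonneg (pow_nonneg (hfnn s) 2) _)
          hf2query (by positivity)
      refine le_trans (Real.rpow_le_rpow hY0 hstep1 (by norm_num)) ?_
      have hA0 : 0 ≤ (∫ s in Ioc (0:ℝ) t, K₂ t s ^ (2*β)) ^ (1/β) :=
        Real.rpow_nonneg hK2I0 _
      have hB0 : 0 ≤ (f t ^ (2*(β/(β-1)) - 1) * I) ^ (1/(β/(β-1))) :=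
        Real.rpow_nonneg (mul_nonneg (Real.rpow_nonneg hft0 _) hI0) _
      rw [Real.mul_rpow hA0 hB0, ← Real.rpow_mul hK2I0,
        ← Real.rpow_mul (mul_nonneg (Real.rpow_nonneg hft0 _) hI0),
        Real.mul_rpow (Real.rpow_nonneg hft0 _) hI0, ← Real.rpow_mul hft0]
      have he1 : (1/β) * (1/2) = 1/(2*β) := by
        rw [div_mul_div_comm, one_mul, mul_comm]
      have he2 : (2*(β/(β-1)) - 1) * (1/(β/(β-1)) * (1/2)) = ρ := by
        rw [hρ]; field_simp; ring
      have he3 : 1/(β/(β-1)) * (1/2) = 1 - ρ := by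
        rw [one_div_div, hρ]; field_simp; ring
      rw [he1, he2, he3]
      refine mul_le_mul_of_nonneg_right (hψle t ht) ?_
      exact mul_nonneg (Real.rpow_nonneg hft0 _) (Real.rpow_nonneg hI0 _)
    -- full bound for the A-term
    have hAterm : ∫ s in Ioc (0:ℝ) t, K₁ t s * f s
        ≤ φstar * (f t ^ ρ * I ^ (1-ρ)) := by
      rw [one_div_div] at hH1
      refine hH1.trans ?_
      refine mul_le_mul (hφle t ht) hfq_rpow
        (Real.rpow_nonneg (integral_nonneg fun s => Real.rpow_nonneg (hfnn s) _) _) hφ0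
    -- combine
    have hcomb : f t ≤ (A * φstar + B * ψstar) * (f t ^ ρ * I ^ (1-ρ)) + ψ t := by
      have h := hineq t ht
      have h1 := mul_le_mul_of_nonneg_left hAterm hA.le
      have h2 := mul_le_mul_of_nonneg_left hBterm hB.le
      have heq : A * (φstar * (f t ^ ρ * I ^ (1-ρ))) + B * (ψstar * (f t ^ ρ * I ^ (1-ρ)))
          = (A * φstar + B * ψstar) * (f t ^ ρ * I ^ (1-ρ)) := by ring
      linarith
    rcases eq_or_lt_of_le hC0 with hCeq | hCpos
    · have hK'z : K' = 0 := by
        rw [hK', ← hCeq, Real.zero_rpow (by positivity : 1/(1-ρ) ≠ 0), mul_zero]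
      rw [← hCeq, zero_mul, zero_add] at hcomb
      rw [hK'z]
      have := hψnn t
      linarith
    · have hy := aux_young hρ0 hρ1 hCpos hft0 hI0
      have hcoef : (2:ℝ) ^ (1 / (1 - ρ)) * (1 - ρ) * ρ ^ (ρ / (1 - ρ))
          * (A * φstar + B * ψstar) ^ (1 / (1 - ρ)) / 2 = K' / 2 := by
        rw [hK']
      rw [hcoef] at hy
      linarith
  exact aux_gronwall_iter hK'0 hfint hfmono hψmono hψnn key
end

section
/- Hölder continuity of the fractional kernel integral in the first variable: for K_α(u) = u^{α−1}/Γ(α) with α ∈ (1/2, 1], there is a constant κ such that for all δ ∈ (0,T) and all t ∈ [0,T], (∫₀ᵗ |K_α(t+δ−s) − K_α(t−s)|² ds)^{1/2} ≤ κ δ^{α−1/2}. -/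
open MeasureTheory Set

lemma frac_kernel_ptwise {p x δ G : ℝ} (hp : p ≤ 0) (hx : 0 < x) (hδ : 0 < δ)
    (hG : 0 < G) :
    ((x + δ) ^ p / G - x ^ p / G) ^ (2 : ℕ) ≤ (x ^ (2 * p) - (x + δ) ^ (2 * p)) / G ^ 2 := by
  have hxδ : 0 < x + δ := by linarith
  have hba : (x + δ) ^ p ≤ x ^ p := Real.rpow_le_rpow_of_nonpos hx (by linarith) hp
  have hb : 0 ≤ (x + δ) ^ p := Real.rpow_nonneg hxδ.le p
  have h1 : x ^ (2 * p) = (x ^ p) ^ (2 : ℕ) := by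
    rw [mul_comm, Real.rpow_mul hx.le, Real.rpow_two]
  have h2 : (x + δ) ^ (2 * p) = ((x + δ) ^ p) ^ (2 : ℕ) := by
    rw [mul_comm, Real.rpow_mul hxδ.le, Real.rpow_two]
  rw [h1, h2, div_sub_div_same, div_pow]
  gcongr
  nlinarith [mul_nonneg hb (sub_nonneg.mpr hba)]

/-- Hölder continuity in the first variable of the fractional-kernel integral: for
`K_α(u) = u^{α-1}/Γ(α)` with `α ∈ (1/2, 1]`, there is `κ` such that for all `δ ∈ (0,T)` and
`t ∈ [0,T]`, `(∫₀ᵗ |K_α(t+δ-s) - K_α(t-s)|² ds)^{1/2} ≤ κ δ^{α-1/2}`. -/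
theorem fractional_kernel_holder_first_variable
    (T α : ℝ) (hT : 0 < T) (hα : α ∈ Ioc (1 / 2 : ℝ) 1) :
    ∃ κ : ℝ, ∀ δ ∈ Ioo (0 : ℝ) T, ∀ t ∈ Icc (0 : ℝ) T,
      (∫ s in Ioc (0 : ℝ) t,
          ((t + δ - s) ^ (α - 1) / Real.Gamma α - (t - s) ^ (α - 1) / Real.Gamma α) ^ (2 : ℕ))
          ^ ((1 : ℝ) / 2)
        ≤ κ * δ ^ (α - 1 / 2) := by
  obtain ⟨hα1, hα2⟩ := hα
  have hΓ : 0 < Real.Gamma α := Real.Gamma_pos_of_pos (by linarith)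
  set G := Real.Gamma α with hGdef
  set C : ℝ := 1 / ((2 * α - 1) * G ^ 2) with hC
  have h2α : (0:ℝ) < 2 * α - 1 := by linarith
  have hCpos : 0 < C := by positivity
  refine ⟨C ^ ((1:ℝ)/2), fun δ hδ t ht => ?_⟩
  obtain ⟨hδ0, hδT⟩ := hδ
  have h0t : (0:ℝ) ≤ t := ht.1
  set q : ℝ := 2 * α - 2 with hq
  have hq1 : (-1:ℝ) < q := by rw [hq]; linarith
  have hq1' : q + 1 = 2 * α - 1 := by rw [hq]; ring
  -- interval integrabilities
  have hint1 : IntervalIntegrable (fun s => (t - s) ^ q) volume 0 t := by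
    have base : IntervalIntegrable (fun x : ℝ => x ^ q) volume t 0 :=
      intervalIntegral.intervalIntegrable_rpow' hq1
    simpa using base.comp_sub_left t
  have hint2 : IntervalIntegrable (fun s => (t + δ - s) ^ q) volume 0 t := by
    have base : IntervalIntegrable (fun x : ℝ => x ^ q) volume (t + δ) δ :=
      intervalIntegral.intervalIntegrable_rpow' hq1
    have := base.comp_sub_left (t + δ)
    simpa using this
  
  set f : ℝ → ℝ := fun s => ((t + δ - s) ^ (α - 1) / G - (t - s) ^ (α - 1) / G) ^ (2 : ℕ)
    with hf
  set g : ℝ → ℝ := fun s => ((t - s) ^ q - (t + δ - s) ^ q) / G ^ 2 with hg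
  have hintg : IntervalIntegrable g volume 0 t := (hint1.sub hint2).div_const _
  -- integrability of f by domination
  have hmeasf : AEStronglyMeasurable f (volume.restrict (uIoc (0:ℝ) t)) := by
    apply Measurable.aestronglyMeasurable
    fun_prop
  have hintf : IntervalIntegrable f volume 0 t := by
    have hdom : IntervalIntegrable (fun s => (2 * (t + δ - s) ^ q + 2 * (t - s) ^ q) / G ^ 2)
        volume 0 t := ((hint2.const_mul 2).add (hint1.const_mul 2)).div_const _
    refine hdom.mono_fun' hmeasf ?_
    rw [Filter.EventuallyLE, ae_restrict_iff' measurableSet_uIoc]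
    refine Filter.Eventually.of_forall fun s hs => ?_
    rw [uIoc_of_le h0t] at hs
    have hs1 : 0 < t + δ - s := by have := hs.2; linarith
    have hs2 : 0 ≤ t - s := by have := hs.2; linarith
    have hA : ((t + δ - s) ^ (α - 1)) ^ (2:ℕ) = (t + δ - s) ^ q := by
      rw [show q = (α-1) * 2 by rw [hq]; ring, Real.rpow_mul hs1.le, Real.rpow_two]
    have hB : ((t - s) ^ (α - 1)) ^ (2:ℕ) = (t - s) ^ q := by
      rw [show q = (α-1) * 2 by rw [hq]; ring, Real.rpow_mul hs2, Real.rpow_two]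
    have hGA : 0 < G ^ 2 := by positivity
    simp only [hf]
    rw [Real.norm_eq_abs, div_sub_div_same, div_pow, abs_of_nonneg (by positivity)]
    rw [div_le_div_iff₀ hGA hGA]
    have key : ((t + δ - s) ^ (α - 1) - (t - s) ^ (α - 1)) ^ (2:ℕ)
        ≤ 2 * (t + δ - s) ^ q + 2 * (t - s) ^ q := by
      nlinarith [hA, hB, sq_nonneg ((t + δ - s) ^ (α - 1) + (t - s) ^ (α - 1))]
    nlinarith [key, hGA.le]
  -- a.e. pointwise bound on Icc
  have hae : f ≤ᵐ[volume.restrict (Icc (0:ℝ) t)] g := by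
    have hne : ∀ᵐ s ∂(volume.restrict (Icc (0:ℝ) t)), s ≠ t := by
      refine ae_restrict_of_ae ?_
      have : (volume : Measure ℝ) {t} = 0 := Real.volume_singleton
      exact (ae_iff.2 (by simpa using this))
    filter_upwards [ae_restrict_mem measurableSet_Icc, hne] with s hs hst
    have hx : 0 < t - s := lt_of_le_of_ne (by linarith [hs.2]) (by intro h; exact hst (by linarith))
    have := frac_kernel_ptwise (p := α - 1) (x := t - s) (δ := δ) (G := G)
      (by linarith) hx hδ0 hΓ
    simp only [hf, hg]
    rw [show q = 2 * (α - 1) by rw [hq]; ring]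
    convert this using 3 <;> ring
  -- main comparison
  have hmono : (∫ s in (0:ℝ)..t, f s) ≤ ∫ s in (0:ℝ)..t, g s :=
    intervalIntegral.integral_mono_ae_restrict h0t hintf hintg hae
  -- compute ∫ g
  have hg1 : (∫ s in (0:ℝ)..t, (t - s) ^ q) = t ^ (q + 1) / (q + 1) := by
    rw [intervalIntegral.integral_comp_sub_left (fun x : ℝ => x ^ q) t]
    simp only [sub_self, sub_zero]
    rw [integral_rpow (Or.inl hq1), Real.zero_rpow (by linarith), sub_zero]
  have hg2 : (∫ s in (0:ℝ)..t, (t + δ - s) ^ q)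
      = ((t + δ) ^ (q + 1) - δ ^ (q + 1)) / (q + 1) := by
    rw [intervalIntegral.integral_comp_sub_left (fun x : ℝ => x ^ q) (t + δ)]
    simp only [sub_self, add_sub_cancel_left]
    rw [integral_rpow (Or.inl hq1)]
    ring_nf
  have hgval : (∫ s in (0:ℝ)..t, g s)
      = (t ^ (q + 1) - (t + δ) ^ (q + 1) + δ ^ (q + 1)) / ((q + 1) * G ^ 2) := by
    simp only [hg]
    rw [intervalIntegral.integral_div, intervalIntegral.integral_sub hint1 hint2, hg1, hg2,
      div_sub_div_same, div_div]
    congr 1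
    ring
  have htle : t ^ (q + 1) ≤ (t + δ) ^ (q + 1) :=
    Real.rpow_le_rpow h0t (by linarith) (by linarith)
  have hbound : (∫ s in (0:ℝ)..t, g s) ≤ δ ^ (2 * α - 1) * C := by
    rw [hgval, hq1', hC, mul_one_div]
    rw [hq1'] at htle
    gcongr (?_ : ℝ) / _
    linarith
  -- final computation
  have hnn : (0:ℝ) ≤ ∫ s in (0:ℝ)..t, f s :=
    intervalIntegral.integral_nonneg h0t (fun u _ => by positivity)
  rw [← intervalIntegral.integral_of_le h0t]
  calc (∫ s in (0:ℝ)..t, f s) ^ ((1:ℝ)/2)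
      ≤ (δ ^ (2 * α - 1) * C) ^ ((1:ℝ)/2) :=
        Real.rpow_le_rpow hnn (hmono.trans hbound) (by norm_num)
    _ = C ^ ((1:ℝ)/2) * δ ^ (α - 1/2) := by
        rw [Real.mul_rpow (by positivity) hCpos.le, ← Real.rpow_mul hδ0.le,
          show (2*α-1)*((1:ℝ)/2) = α - 1/2 by ring, mul_comm]
end
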